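/- Let $l_1, l_2, l_3$ be the side lengths of a hyperbolic triangle (positive reals satisfying the strict triangle inequalities). Then $\cosh l_1 > \dfrac{\cosh^2 l_2 + \cosh^2 l_3 + \cosh l_2 + \cosh l_3}{2 \cosh l_2 \cosh l_3 + \cosh l_2 + \cosh l_3}$. -/
import Mathlib


theorem cosh_minor_positive
    (l1 l2 l3 : ℝ)
    (hl1 : 0 < l1) (hl2 : 0 < l2) (hl3 : 0 < l3)
    (t1 : l1 < l2 + l3) (t2 : l2 < l3 + l1) (t3 : l3 < l1 + l2) :
    Real.cosh l1 >
      (Real.cosh l2 ^ 2 + Real.cosh l3 ^ 2 + Real.cosh l2 + Real.cosh l3)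
        / (2 * Real.cosh l2 * Real.cosh l3 + Real.cosh l2 + Real.cosh l3) := by
  set a := Real.cosh l2 with ha
  set b := Real.cosh l3 with hb
  have ha1 : 1 ≤ a := Real.one_le_cosh l2
  have hb1 : 1 ≤ b := Real.one_le_cosh l3
  have hden : 0 < 2 * a * b + a + b := by nlinarith
  set q := Real.cosh (l2 - l3) with hq
  have hq1 : 1 ≤ q := Real.one_le_cosh _
  -- key identity: 2*a*b*q = q^2 + a^2 + b^2 - 1
  have hid : 2 * a * b * q = q ^ 2 + a ^ 2 + b ^ 2 - 1 := by
    have h1 : q = a * b - Real.sinh l2 * Real.sinh l3 := by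
      rw [hq, Real.cosh_sub]
    have h2 : Real.sinh l2 ^ 2 = a ^ 2 - 1 := by
      rw [Real.sinh_sq]
    have h3 : Real.sinh l3 ^ 2 = b ^ 2 - 1 := by
      rw [Real.sinh_sq]
    nlinarith [sq_nonneg (Real.sinh l2 * Real.sinh l3)]
  have hstep : Real.cosh l1 > q := by
    show Real.cosh (l2 - l3) < Real.cosh l1
    rw [Real.cosh_lt_cosh, abs_of_pos hl1, abs_sub_lt_iff]
    constructor <;> linarith
  have hq_ge : q ≥ (a ^ 2 + b ^ 2 + a + b) / (2 * a * b + a + b) := by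
    rw [ge_iff_le, div_le_iff₀ hden]
    nlinarith [mul_nonneg (sub_nonneg.2 hq1) (by linarith : (0:ℝ) ≤ q + 1 + a + b)]
  linarith
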